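/- arXiv:2003.01512 — 2 statements merged into one kernel-verified Lean document; each statement's English description precedes it below -/
import Mathlib

section
/- Let E be a countable Polish space. Then there exists a countable ordinal α such that for every compact countable subset K of E, K^(α) = ∅. -/
/-- The Cantor-Bendixson derivative of a set, by transfinite recursion. -/
noncomputable def cbDeriv {X : Type*} [TopologicalSpace X] (A : Set X) (o : Ordinal) : Set X :=
  Ordinal.limitRecOn o A (fun _ ih => derivedSet ih)
    (fun o _ ih => ⋂ (b : Set.Iio o), ih b.1 b.2)

/-- `IsCB A α p` : the Cantor-Bendixson characteristic of `A` is `(α, p)`,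
i.e. `α` is the least ordinal with `A^(α)` finite, and `p = |A^(α)|`. -/
def IsCB {X : Type*} [TopologicalSpace X] (A : Set X) (α : Ordinal) (p : ℕ) : Prop :=
  (cbDeriv A α).Finite ∧ (∀ β < α, ¬ (cbDeriv A β).Finite) ∧ (cbDeriv A α).ncard = p

lemma cbDeriv_zero {X : Type*} [TopologicalSpace X] (A : Set X) : cbDeriv A 0 = A :=
  Ordinal.limitRecOn_zero _ _ _

lemma cbDeriv_succ {X : Type*} [TopologicalSpace X] (A : Set X) (o : Ordinal) :
    cbDeriv A (Order.succ o) = derivedSet (cbDeriv A o) :=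
  Ordinal.limitRecOn_succ _ _ _ _

lemma cbDeriv_limit {X : Type*} [TopologicalSpace X] (A : Set X) {o : Ordinal}
    (ho : Order.IsSuccLimit o) : cbDeriv A o = ⋂ (b : Set.Iio o), cbDeriv A b.1 :=
  Ordinal.limitRecOn_limit _ _ _ _ ho

lemma cbDeriv_mono {X : Type*} [TopologicalSpace X] {A B : Set X} (h : A ⊆ B) (o : Ordinal) :
    cbDeriv A o ⊆ cbDeriv B o := by
  induction o using Ordinal.limitRecOn with
  | zero => simpa [cbDeriv_zero] using h
  | add_one o ih =>
    rw [← Order.succ_eq_add_one, cbDeriv_succ, cbDeriv_succ]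
    exact derivedSet_mono _ _ ih
  | limit o ho ih =>
    rw [cbDeriv_limit A ho, cbDeriv_limit B ho]
    exact Set.iInter_mono fun b => ih b.1 b.2

lemma cbDeriv_isClosed {X : Type*} [TopologicalSpace X] [T1Space X] {A : Set X}
    (hA : IsClosed A) (o : Ordinal) : IsClosed (cbDeriv A o) := by
  induction o using Ordinal.limitRecOn with
  | zero => rwa [cbDeriv_zero]
  | add_one o ih => rw [← Order.succ_eq_add_one, cbDeriv_succ]; exact isClosed_derivedSet _
  | limit o ho ih => rw [cbDeriv_limit A ho]; exact isClosed_iInter fun b => ih b.1 b.2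

lemma cbDeriv_antitone {X : Type*} [TopologicalSpace X] [T1Space X] {A : Set X}
    (hA : IsClosed A) : ∀ {α β : Ordinal}, β ≤ α → cbDeriv A α ⊆ cbDeriv A β := by
  intro α
  induction α using Ordinal.limitRecOn with
  | zero => intro β hβ; rw [nonpos_iff_eq_zero.mp hβ]
  | add_one o ih =>
    intro β hβ
    rw [← Order.succ_eq_add_one] at hβ ⊢
    rcases Order.le_succ_iff_eq_or_le.mp hβ with rfl | hβ
    · exact subset_rfl
    · refine subset_trans ?_ (ih hβ)
      rw [cbDeriv_succ]
      exact (derivedSet_subset_closure _).trans (cbDeriv_isClosed hA o).closure_subset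
  | limit o ho ih =>
    intro β hβ
    rcases eq_or_lt_of_le hβ with rfl | hβ
    · exact subset_rfl
    · rw [cbDeriv_limit A ho]
      exact Set.iInter_subset _ (⟨β, hβ⟩ : Set.Iio o)

theorem stmt7_aux.{v, u} {E : Type u} [TopologicalSpace E] [PolishSpace E] [Countable E] :
    ∃ α : Ordinal.{v}, α < (Cardinal.aleph 1).ord ∧
      ∀ K : Set E, IsCompact K → K.Countable → cbDeriv K α = ∅ := by
  rcases isEmpty_or_nonempty E with hE | hE
  · refine ⟨0, ?_, fun K _ _ => ?_⟩
    · rw [Cardinal.lt_ord, Ordinal.card_zero]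
      exact (Cardinal.aleph0_pos).trans Cardinal.aleph0_lt_aleph_one
    · rw [cbDeriv_zero]; exact Set.eq_empty_of_isEmpty K
  -- find a stabilization point below ω₁
  have hstab : ∃ α : Ordinal.{v}, α < (Cardinal.aleph 1).ord ∧
      cbDeriv (Set.univ : Set E) (Order.succ α) = cbDeriv (Set.univ : Set E) α := by
    by_contra h
    push_neg at h
    have hne : ∀ α ∈ Set.Iio (Cardinal.aleph 1).ord,
        (cbDeriv (Set.univ : Set E) α \ cbDeriv (Set.univ : Set E) (Order.succ α)).Nonempty := by
      intro α hα
      rw [Set.diff_nonempty]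
      intro hsub
      exact h α hα (le_antisymm (cbDeriv_antitone isClosed_univ (Order.le_succ α)) hsub)
    choose! f hf using hne
    have key : ∀ a ∈ Set.Iio (Cardinal.aleph 1).ord, ∀ b ∈ Set.Iio (Cardinal.aleph 1).ord,
        a < b → f a ≠ f b := by
      intro a ha b hb hlt hab
      have h1 : f b ∈ cbDeriv (Set.univ : Set E) (Order.succ a) :=
        cbDeriv_antitone isClosed_univ (Order.succ_le_of_lt hlt) (hf b hb).1
      rw [← hab] at h1
      exact (hf a ha).2 h1
    have hemb : Nonempty (Set.Iio (Cardinal.aleph 1).ord ↪ E) := by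
      refine ⟨⟨fun x => f x.1, fun a b hab => ?_⟩⟩
      rcases lt_trichotomy a.1 b.1 with h' | h' | h'
      · exact absurd hab (key a.1 a.2 b.1 b.2 h')
      · exact Subtype.ext h'
      · exact absurd hab.symm (key b.1 b.2 a.1 a.2 h')
    have hcard := Cardinal.lift_mk_le'.mpr hemb
    rw [Ordinal.mk_Iio_ordinal, Cardinal.card_ord, Cardinal.lift_lift] at hcard
    have hE : Cardinal.mk E ≤ Cardinal.aleph0 := Cardinal.mk_le_aleph0
    have h2 := hcard.trans ((Cardinal.lift_le.mpr hE).trans_eq Cardinal.lift_aleph0)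
    rw [← Cardinal.lift_aleph0.{max (v + 1) u, v}, Cardinal.lift_le] at h2
    exact absurd h2 (not_le.mpr Cardinal.aleph0_lt_aleph_one)
  obtain ⟨α, hα, hfix⟩ := hstab
  refine ⟨α, hα, fun K _ _ => ?_⟩
  -- the stabilized set is perfect, hence empty since E is countable
  have hperf : Perfect (cbDeriv (Set.univ : Set E) α) := by
    rw [perfect_iff_eq_derivedSet, ← cbDeriv_succ, hfix]
  have hempty : cbDeriv (Set.univ : Set E) α = ∅ := by
    by_contra hne
    letI := TopologicalSpace.upgradeIsCompletelyMetrizable E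
    obtain ⟨g, hgr, _, hginj⟩ :=
      hperf.exists_nat_bool_injection (Set.nonempty_iff_ne_empty.mpr hne)
    have hcnt : Countable (ℕ → Bool) := Function.Injective.countable hginj
    have hc2 : Countable (Set ℕ) :=
      (Equiv.arrowCongr (Equiv.refl ℕ) Equiv.propEquivBool).injective.countable
    obtain ⟨i, hi⟩ := Countable.exists_injective_nat (Set ℕ)
    exact Function.cantor_injective i hi
  have := cbDeriv_mono (Set.subset_univ K) α
  rw [hempty] at this
  exact Set.subset_eq_empty this rfl

theorem stmt7 {E : Type*} [TopologicalSpace E] [PolishSpace E] [Countable E] :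
    ∃ α : Ordinal, α < (Cardinal.aleph 1).ord ∧
      ∀ K : Set E, IsCompact K → K.Countable → cbDeriv K α = ∅ :=
  stmt7_aux
end

section
/- Let X be a T1 topological space, K and F closed subsets of X such that K ∩ F = K ∩ int(F). Then for every ordinal α, (K ∩ F)^(α) = K^(α) ∩ F. -/
lemma cbDeriv_closed_subset {X : Type*} [TopologicalSpace X] [T1Space X] {K : Set X}
    (hK : IsClosed K) (α : Ordinal) : IsClosed (cbDeriv K α) ∧ cbDeriv K α ⊆ K := by
  induction α using Ordinal.limitRecOn with
  | zero => simpa [cbDeriv_zero] using hK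
  | add_one o ih =>
    rw [← Order.succ_eq_add_one, cbDeriv_succ]
    exact ⟨isClosed_derivedSet _, ((isClosed_iff_derivedSet_subset _).mp ih.1).trans ih.2⟩
  | limit o ho ih =>
    rw [cbDeriv_limit _ ho]
    refine ⟨isClosed_iInter fun b => (ih b.1 b.2).1, ?_⟩
    have : (⟨0, ho.pos⟩ : Set.Iio o) = ⟨0, ho.pos⟩ := rfl
    exact (Set.iInter_subset _ (⟨0, ho.pos⟩ : Set.Iio o)).trans
      (by rw [cbDeriv_zero])

theorem stmt8 {X : Type*} [TopologicalSpace X] [T1Space X] (K F : Set X)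
    (hK : IsClosed K) (hF : IsClosed F) (h : K ∩ F = K ∩ interior F) (α : Ordinal) :
    cbDeriv (K ∩ F) α = cbDeriv K α ∩ F := by
  induction α using Ordinal.limitRecOn with
  | zero => simp [cbDeriv_zero]
  | add_one o ih =>
    rw [← Order.succ_eq_add_one, cbDeriv_succ, cbDeriv_succ, ih]
    obtain ⟨hcl, hsub⟩ := cbDeriv_closed_subset hK o
    apply Set.Subset.antisymm
    · intro x hx
      refine ⟨derivedSet_mono _ _ Set.inter_subset_left hx, ?_⟩
      have : x ∈ closure (cbDeriv K o ∩ F) := derivedSet_subset_closure _ hx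
      exact hF.closure_subset (closure_mono Set.inter_subset_right this)
    · rintro x ⟨hx, hxF⟩
      have hxK : x ∈ K := hsub ((isClosed_iff_derivedSet_subset _).mp hcl hx)
      have hxint : x ∈ interior F := (h.subset ⟨hxK, hxF⟩).2
      rw [mem_derivedSet, accPt_iff_nhds] at hx ⊢
      intro U hU
      obtain ⟨y, ⟨hyU, hyC⟩, hyx⟩ := hx (U ∩ interior F)
        (Filter.inter_mem hU (isOpen_interior.mem_nhds hxint))
      exact ⟨y, ⟨hyU.1, hyC, interior_subset hyU.2⟩, hyx⟩
  | limit o ho ih =>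
    rw [cbDeriv_limit _ ho, cbDeriv_limit _ ho]
    haveI : Nonempty (Set.Iio o) := ⟨⟨0, ho.pos⟩⟩
    rw [Set.iInter_inter]
    exact Set.iInter_congr fun b => ih b.1 b.2
end
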